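/- Let (V,H,L) be a holonomic space with nontrivial H and let ϱ(u) denote the holonomy radius at u. Then |ϱ(u) − ϱ(v)| ≤ ‖u − v‖ for all u, v ∈ V; in particular ϱ is continuous. -/

import Mathlib

/-- A holonomic space structure on `V`. -/
structure HolonomicSpace (V : Type*) [NormedAddCommGroup V] [NormedSpace ℝ V] where
  H : Subgroup (V ≃ₗᵢ[ℝ] V)
  L : H → ℝ
  L_nonneg : ∀ a, 0 ≤ L a
  L_eq_zero : ∀ a, L a = 0 ↔ a = 1
  L_inv : ∀ a, L a⁻¹ = L a
  L_mul : ∀ a b, L (a * b) ≤ L a + L b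
  convexity : ∀ u : V, ∃ r > 0, ∀ v w : V, ‖v - u‖ < r → ‖w - u‖ < r →
    ∀ A : H, ‖v - w‖ ^ 2 - ‖v - (A : V ≃ₗᵢ[ℝ] V) w‖ ^ 2 ≤ L A ^ 2

/-- The holonomy radius of a point `u` in a holonomic space: the supremum of the
radii `r > 0` for which the convexity property (P) holds on the `r`-ball at `u`. -/
noncomputable def holRad {V : Type*} [NormedAddCommGroup V] [NormedSpace ℝ V]
    (HS : HolonomicSpace V) (u : V) : ℝ :=
  sSup {r : ℝ | 0 < r ∧ ∀ v w : V, ‖v - u‖ < r → ‖w - u‖ < r →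
    ∀ A : HS.H, ‖v - w‖ ^ 2 - ‖v - (A : V ≃ₗᵢ[ℝ] V) w‖ ^ 2 ≤ HS.L A ^ 2}

section Aux
variable {V : Type*} [NormedAddCommGroup V] [NormedSpace ℝ V] (HS : HolonomicSpace V)

def holSet (u : V) : Set ℝ :=
  {r : ℝ | 0 < r ∧ ∀ v w : V, ‖v - u‖ < r → ‖w - u‖ < r →
    ∀ A : HS.H, ‖v - w‖ ^ 2 - ‖v - (A : V ≃ₗᵢ[ℝ] V) w‖ ^ 2 ≤ HS.L A ^ 2}

lemma holRad_eq (u : V) : holRad HS u = sSup (holSet HS u) := rfl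

lemma holSet_nonempty (u : V) : (holSet HS u).Nonempty := by
  obtain ⟨r, hr, h⟩ := HS.convexity u
  exact ⟨r, hr, h⟩

lemma holSet_bddAbove (hH : HS.H ≠ ⊥) (u : V) : BddAbove (holSet HS u) := by
  obtain ⟨A, hA⟩ := Subgroup.ne_bot_iff_exists_ne_one.mp hH
  have hw : ∃ w : V, (A : V ≃ₗᵢ[ℝ] V) w ≠ w := by
    by_contra h
    push_neg at h
    exact hA (Subtype.ext (LinearIsometryEquiv.ext h))
  obtain ⟨w, hw⟩ := hw
  set d : V := w - (A : V ≃ₗᵢ[ℝ] V) w with hd_def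
  have hd : d ≠ 0 := sub_ne_zero.mpr (Ne.symm hw)
  have hdn : (0:ℝ) < ‖d‖ := norm_pos_iff.mpr hd
  set s : ℝ := HS.L A ^ 2 / ‖d‖ ^ 2 + 1 with hs_def
  have hs1 : (1:ℝ) ≤ s := by
    rw [hs_def]
    have : (0:ℝ) ≤ HS.L A ^ 2 / ‖d‖ ^ 2 := by positivity
    linarith
  refine ⟨‖w - u‖ + s * ‖d‖ + 1, fun r hr => ?_⟩
  by_contra hlt
  push_neg at hlt
  set v : V := w - s • d with hv_def
  have h1 : ‖w - u‖ < r := by nlinarith [mul_pos (lt_of_lt_of_le one_pos hs1) hdn]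
  have h2 : ‖v - u‖ < r := by
    have : ‖v - u‖ ≤ ‖v - w‖ + ‖w - u‖ := norm_sub_le_norm_sub_add_norm_sub v w u
    have hvw : ‖v - w‖ = s * ‖d‖ := by
      rw [hv_def]
      rw [show w - s • d - w = -(s • d) by abel, norm_neg, norm_smul,
        Real.norm_eq_abs, abs_of_pos (lt_of_lt_of_le one_pos hs1)]
    nlinarith
  have := hr.2 v w h2 h1 A
  have hvw : ‖v - w‖ = s * ‖d‖ := by
    rw [hv_def]
    rw [show w - s • d - w = -(s • d) by abel, norm_neg, norm_smul,
      Real.norm_eq_abs, abs_of_pos (lt_of_lt_of_le one_pos hs1)]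
  have hvAw : ‖v - (A : V ≃ₗᵢ[ℝ] V) w‖ = (s - 1) * ‖d‖ := by
    have : v - (A : V ≃ₗᵢ[ℝ] V) w = (1 - s) • d := by
      rw [hv_def, hd_def]
      module
    rw [this, norm_smul, Real.norm_eq_abs, abs_of_nonpos (by linarith)]
    ring
  rw [hvw, hvAw] at this
  have hL : 0 ≤ HS.L A := HS.L_nonneg A
  have hkey : HS.L A ^ 2 = (s - 1) * ‖d‖ ^ 2 := by
    rw [hs_def]
    field_simp
    ring
  nlinarith

lemma holRad_pos (hH : HS.H ≠ ⊥) (u : V) : 0 < holRad HS u := by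
  obtain ⟨r, hr⟩ := holSet_nonempty HS u
  exact lt_of_lt_of_le hr.1 (le_csSup (holSet_bddAbove HS hH u) hr)

lemma holRad_le (hH : HS.H ≠ ⊥) (u v : V) :
    holRad HS u ≤ holRad HS v + ‖u - v‖ := by
  rw [holRad_eq]
  apply csSup_le (holSet_nonempty HS u)
  intro r hr
  rcases le_or_gt r ‖u - v‖ with h | h
  · have := holRad_pos HS hH v
    linarith
  · have hmem : r - ‖u - v‖ ∈ holSet HS v := by
      refine ⟨by linarith, fun x y hx hy A => ?_⟩
      have hx' : ‖x - u‖ < r := by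
        have : ‖x - u‖ ≤ ‖x - v‖ + ‖v - u‖ := norm_sub_le_norm_sub_add_norm_sub x v u
        rw [norm_sub_rev v u] at this
        linarith
      have hy' : ‖y - u‖ < r := by
        have : ‖y - u‖ ≤ ‖y - v‖ + ‖v - u‖ := norm_sub_le_norm_sub_add_norm_sub y v u
        rw [norm_sub_rev v u] at this
        linarith
      exact hr.2 x y hx' hy' A
    have := le_csSup (holSet_bddAbove HS hH v) hmem
    rw [← holRad_eq] at this
    linarith

end Aux

/-- for nontrivial `H`, the holonomy radius is 1-Lipschitz
(`|ϱ(u) − ϱ(v)| ≤ ‖u − v‖`), hence continuous. -/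
theorem holRad_lipschitz_continuous
    {V : Type*} [NormedAddCommGroup V] [NormedSpace ℝ V]
    (HS : HolonomicSpace V) (hH : HS.H ≠ ⊥) :
    (∀ u v : V, |holRad HS u - holRad HS v| ≤ ‖u - v‖) ∧
      Continuous (holRad HS) := by
  have key : ∀ u v : V, |holRad HS u - holRad HS v| ≤ ‖u - v‖ := by
    intro u v
    rw [abs_sub_le_iff]
    constructor
    · have := holRad_le HS hH u v
      linarith
    · have := holRad_le HS hH v u
      rw [norm_sub_rev] at this
      linarith
  refine ⟨key, ?_⟩
  have : LipschitzWith 1 (holRad HS) := by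
    apply LipschitzWith.of_dist_le_mul
    intro u v
    rw [Real.dist_eq, dist_eq_norm, NNReal.coe_one, one_mul]
    exact key u v
  exact this.continuous
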